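/- The map f = f₁ ∘ f₂, where f₂(z) = (e^{πz} − 1)/(e^{πz} + 1) and f₁(w) = (1/2)(w + 1/w), is a covering map from ℂ \ iℤ onto ℂ \ {−1, 1}. -/

import Mathlib

open Complex

/-- The set `iℤ = {i·m : m ∈ ℤ}` of integer multiples of `i`. -/
def intMulI : Set ℂ := {z : ℂ | ∃ m : ℤ, z = Complex.I * (m : ℂ)}

/-- `f₂(z) = (e^{πz} − 1)/(e^{πz} + 1)`. -/
noncomputable def fTwo (z : ℂ) : ℂ :=
  (Complex.exp (Real.pi * z) - 1) / (Complex.exp (Real.pi * z) + 1)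

/-- `f₁(w) = (1/2)(w + 1/w)`. -/
noncomputable def fOne (w : ℂ) : ℂ := (w + w⁻¹) / 2

noncomputable def mob (w : ℂ) : ℂ := (w + 1) / (w - 1)

lemma exp2pi_eq_one {z : ℂ} (hz : z ∈ intMulI) : Complex.exp (2 * Real.pi * z) = 1 := by
  obtain ⟨m, rfl⟩ := hz
  rw [Complex.exp_eq_one_iff]
  exact ⟨m, by ring⟩

lemma exp2pi_ne_one {z : ℂ} (hz : z ∉ intMulI) : Complex.exp (2 * Real.pi * z) ≠ 1 := by
  intro h
  rw [Complex.exp_eq_one_iff] at h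
  obtain ⟨n, hn⟩ := h
  apply hz
  refine ⟨n, ?_⟩
  have hpi : (Real.pi : ℂ) ≠ 0 := Complex.ofReal_ne_zero.mpr Real.pi_ne_zero
  have : (2 : ℂ) * Real.pi * z = 2 * Real.pi * (Complex.I * n) := by rw [hn]; ring
  exact mul_left_cancel₀ (by simp [Real.pi_ne_zero] : (2 : ℂ) * Real.pi ≠ 0) this

lemma exppi_ne_one {z : ℂ} (hz : z ∉ intMulI) : Complex.exp (Real.pi * z) ≠ 1 := by
  intro h
  apply exp2pi_ne_one hz
  have : (2 : ℂ) * Real.pi * z = Real.pi * z + Real.pi * z := by ring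
  rw [this, Complex.exp_add, h, mul_one]

lemma exppi_ne_neg_one {z : ℂ} (hz : z ∉ intMulI) : Complex.exp (Real.pi * z) ≠ -1 := by
  intro h
  apply exp2pi_ne_one hz
  have : (2 : ℂ) * Real.pi * z = Real.pi * z + Real.pi * z := by ring
  rw [this, Complex.exp_add, h]
  ring

lemma key_formula {z : ℂ} (hz : z ∉ intMulI) :
    fOne (fTwo z) = (Complex.exp (2 * Real.pi * z) + 1) / (Complex.exp (2 * Real.pi * z) - 1) := by
  have h1 : Complex.exp (Real.pi * z) ≠ 1 := exppi_ne_one hz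
  have h2 : Complex.exp (Real.pi * z) ≠ -1 := exppi_ne_neg_one hz
  have hsq : Complex.exp (2 * Real.pi * z) = Complex.exp (Real.pi * z) ^ 2 := by
    rw [sq, ← Complex.exp_add]; congr 1; ring
  set v := Complex.exp (Real.pi * z) with hv
  rw [hsq]
  have hvm : v - 1 ≠ 0 := sub_ne_zero.mpr h1
  have hvp : v + 1 ≠ 0 := fun h => h2 (by linear_combination h)
  have hf2 : fTwo z ≠ 0 := div_ne_zero (sub_ne_zero.mpr h1) hvp
  have hsqm : v ^ 2 - 1 ≠ 0 := fun h => by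
    rcases mul_eq_zero.mp (show (v - 1) * (v + 1) = 0 by linear_combination h) with h | h
    exacts [hvm h, hvp h]
  rw [fOne, fTwo]
  rw [fTwo] at hf2
  rw [← hv] at hf2 ⊢
  field_simp
  ring

lemma abstract_ne {u : ℂ} (hu0 : u ≠ 0) (hu1 : u ≠ 1) :
    (u + 1) / (u - 1) ∉ ({-1, 1} : Set ℂ) := by
  have hm : u - 1 ≠ 0 := sub_ne_zero.mpr hu1
  intro h
  rcases h with h | h
  · rw [div_eq_iff hm] at h; apply hu0; linear_combination h / 2
  · simp only [Set.mem_singleton_iff] at h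
    rw [div_eq_iff hm] at h
    exact absurd (by linear_combination h : (2:ℂ) = 0) two_ne_zero

lemma abstract_mob {u : ℂ} (hu1 : u ≠ 1) :
    mob ((u + 1) / (u - 1)) = u := by
  have hm : u - 1 ≠ 0 := sub_ne_zero.mpr hu1
  have h1 : (u + 1) / (u - 1) ≠ 1 := fun h => by
    rw [div_eq_iff hm] at h
    exact absurd (by linear_combination h : (2:ℂ) = 0) two_ne_zero
  have h0 : (u + 1) / (u - 1) - 1 ≠ 0 := sub_ne_zero.mpr h1
  rw [mob, div_eq_iff h0]
  field_simp
  ring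

lemma fval_ne {z : ℂ} (hz : z ∉ intMulI) : fOne (fTwo z) ∉ ({-1, 1} : Set ℂ) := by
  rw [key_formula hz]
  exact abstract_ne (Complex.exp_ne_zero _) (exp2pi_ne_one hz)

lemma mob_ne_zero {w : ℂ} (h1 : w ≠ 1) (h2 : w ≠ -1) : mob w ≠ 0 :=
  div_ne_zero (fun h => h2 (by linear_combination h)) (sub_ne_zero.mpr h1)

lemma mob_ne_one {w : ℂ} (h1 : w ≠ 1) : mob w ≠ 1 := by
  intro h
  rw [mob, div_eq_iff (sub_ne_zero.mpr h1)] at h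
  exact absurd (by linear_combination h : (2:ℂ) = 0) two_ne_zero

lemma mob_mob {w : ℂ} (h1 : w ≠ 1) : mob (mob w) = w := by
  rw [show mob w = (w + 1) / (w - 1) from rfl]
  exact abstract_mob h1

lemma mob_fval {z : ℂ} (hz : z ∉ intMulI) :
    mob (fOne (fTwo z)) = Complex.exp (2 * Real.pi * z) := by
  rw [key_formula hz]
  exact abstract_mob (exp2pi_ne_one hz)

noncomputable def psi (c : ℂ) (w : ℂ) (n : ℤ) : ℂ :=
  (((2 * Real.pi)⁻¹ : ℝ) : ℂ) * (Complex.log (mob w * Complex.exp (-c)) + c) + (n : ℂ) * Complex.I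

noncomputable def nz (c : ℂ) (z : ℂ) : ℤ :=
  ⌊(2 * Real.pi * z.im - c.im + Real.pi) / (2 * Real.pi)⌋

lemma two_pi_pos : (0:ℝ) < 2 * Real.pi := by positivity

lemma two_pi_ne : ((2:ℂ) * Real.pi) ≠ 0 := by
  simp [Real.pi_ne_zero]

lemma exp_psi {c w : ℂ} (hw : mob w ≠ 0) (n : ℤ) :
    Complex.exp (2 * Real.pi * psi c w n) = mob w := by
  have hX : mob w * Complex.exp (-c) ≠ 0 := mul_ne_zero hw (Complex.exp_ne_zero _)
  have hstep : 2 * (Real.pi:ℂ) * psi c w n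
      = Complex.log (mob w * Complex.exp (-c)) + c + (n : ℂ) * (2 * Real.pi * Complex.I) := by
    rw [psi]
    push_cast
    have h := two_pi_ne
    field_simp
  rw [hstep, Complex.exp_add, Complex.exp_int_mul_two_pi_mul_I, mul_one, Complex.exp_add,
    Complex.exp_log hX]
  rw [mul_assoc, ← Complex.exp_add]
  simp

lemma psi_im (c w : ℂ) (n : ℤ) :
    (psi c w n).im = (2 * Real.pi)⁻¹ * ((Complex.log (mob w * Complex.exp (-c))).im + c.im)
      + n := by
  simp [psi, Complex.add_im, Complex.mul_im]

lemma nz_psi {c w : ℂ} (harg : (mob w * Complex.exp (-c)).arg ≠ Real.pi) (n : ℤ) :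
    nz c (psi c w n) = n := by
  set X := mob w * Complex.exp (-c) with hX
  have ha1 : -Real.pi < X.arg := Complex.neg_pi_lt_arg X
  have ha2 : X.arg < Real.pi := lt_of_le_of_ne (Complex.arg_le_pi X) harg
  rw [nz, psi_im, Complex.log_im]
  have h2 : (2 * Real.pi) ≠ 0 := ne_of_gt two_pi_pos
  have hval : (2 * Real.pi * ((2 * Real.pi)⁻¹ * (X.arg + c.im) + ↑n) - c.im + Real.pi)
      / (2 * Real.pi) = (X.arg + Real.pi) / (2 * Real.pi) + n := by
    field_simp
    ring
  rw [hval, Int.floor_add_intCast]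
  have : ⌊(X.arg + Real.pi) / (2 * Real.pi)⌋ = 0 := by
    rw [Int.floor_eq_zero_iff]
    constructor
    · exact div_nonneg (by linarith) (le_of_lt two_pi_pos)
    · rw [div_lt_one two_pi_pos]; linarith
  rw [this, zero_add]

lemma exp_not_slitPlane {ζ : ℂ} (k : ℤ) (h : ζ.im = k * (2 * Real.pi) - Real.pi) :
    Complex.exp ζ ∉ Complex.slitPlane := by
  rw [Complex.mem_slitPlane_iff]
  push_neg
  constructor
  · rw [Complex.exp_re, h, Real.cos_int_mul_two_pi_sub_pi]
    have := Real.exp_pos ζ.re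
    nlinarith
  · rw [Complex.exp_im, h, Real.sin_int_mul_two_pi_sub, Real.sin_pi]
    ring

noncomputable def Fmap : (intMulIᶜ : Set ℂ) → (({-1, 1}ᶜ : Set ℂ)) :=
  fun z => ⟨fOne (fTwo z), fval_ne z.2⟩

lemma Fmap_val (z : (intMulIᶜ : Set ℂ)) : (Fmap z : ℂ) = fOne (fTwo (z : ℂ)) := rfl

lemma T_ne_one (w : ({-1, 1}ᶜ : Set ℂ)) : (w : ℂ) ≠ 1 := by
  intro h; exact w.2 (by rw [h]; simp)

lemma T_ne_neg_one (w : ({-1, 1}ᶜ : Set ℂ)) : (w : ℂ) ≠ -1 := by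
  intro h; exact w.2 (by rw [h]; simp)

lemma mob_Fmap (z : (intMulIᶜ : Set ℂ)) :
    mob (Fmap z : ℂ) = Complex.exp (2 * Real.pi * (z : ℂ)) := mob_fval z.2

lemma continuous_Fmap : Continuous Fmap := by
  apply Continuous.subtype_mk
  have heq : (fun z : (intMulIᶜ : Set ℂ) => fOne (fTwo (z : ℂ)))
      = fun z : (intMulIᶜ : Set ℂ) =>
        (Complex.exp (2 * Real.pi * (z : ℂ)) + 1) / (Complex.exp (2 * Real.pi * (z : ℂ)) - 1) :=
    funext fun z => key_formula z.2
  rw [heq]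
  rw [continuous_iff_continuousAt]
  intro z
  have hc : ContinuousAt (fun z : (intMulIᶜ : Set ℂ) => Complex.exp (2 * Real.pi * (z : ℂ))) z :=
    (Complex.continuous_exp.comp (continuous_const.mul continuous_subtype_val)).continuousAt
  exact (hc.add continuousAt_const).div (hc.sub continuousAt_const)
    (sub_ne_zero.mpr (exp2pi_ne_one z.2))

lemma continuous_mobT (c : ℂ) :
    Continuous (fun w : ({-1, 1}ᶜ : Set ℂ) => mob (w : ℂ) * Complex.exp (-c)) := by
  rw [continuous_iff_continuousAt]
  intro w
  have : ContinuousAt (fun w : ({-1, 1}ᶜ : Set ℂ) => mob (w : ℂ)) w := by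
    apply ContinuousAt.div
    · exact (continuous_subtype_val.add continuous_const).continuousAt
    · exact (continuous_subtype_val.sub continuous_const).continuousAt
    · exact sub_ne_zero.mpr (T_ne_one w)
  exact this.mul continuousAt_const

lemma psi_mem {c : ℂ} (w : ({-1, 1}ᶜ : Set ℂ)) (n : ℤ) : psi c (w : ℂ) n ∈ intMulIᶜ := by
  intro hmem
  have h0 : mob (w : ℂ) ≠ 0 := mob_ne_zero (T_ne_one w) (T_ne_neg_one w)
  have := exp_psi (c := c) h0 n
  rw [exp2pi_eq_one hmem] at this
  exact mob_ne_one (T_ne_one w) this.symm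

lemma Fmap_psi {c : ℂ} (w : ({-1, 1}ᶜ : Set ℂ)) (n : ℤ) :
    Fmap ⟨psi c (w : ℂ) n, psi_mem w n⟩ = w := by
  have h0 : mob (w : ℂ) ≠ 0 := mob_ne_zero (T_ne_one w) (T_ne_neg_one w)
  apply Subtype.ext
  rw [Fmap_val, key_formula (psi_mem w n), exp_psi h0 n]
  rw [show (mob ↑w + 1) / (mob ↑w - 1) = mob (mob ↑w) from rfl]
  exact mob_mob (T_ne_one w)

lemma exists_rep (c : ℂ) (z : (intMulIᶜ : Set ℂ)) :
    ∃ k : ℤ, (z : ℂ) = psi c (Fmap z : ℂ) k := by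
  have h0 : mob (Fmap z : ℂ) ≠ 0 := mob_ne_zero (T_ne_one _) (T_ne_neg_one _)
  have h : Complex.exp (2 * Real.pi * (z : ℂ))
      = Complex.exp (2 * Real.pi * psi c (Fmap z : ℂ) 0) := by
    rw [exp_psi h0, mob_Fmap]
  rw [Complex.exp_eq_exp_iff_exists_int] at h
  obtain ⟨k, hk⟩ := h
  refine ⟨k, ?_⟩
  have hpsi : psi c (Fmap z : ℂ) k = psi c (Fmap z : ℂ) 0 + (k : ℂ) * Complex.I := by
    rw [psi, psi]; push_cast; ring
  apply mul_left_cancel₀ two_pi_ne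
  rw [hpsi]
  linear_combination hk

lemma nz_not_int {c : ℂ} (z : (intMulIᶜ : Set ℂ))
    (hz : mob (Fmap z : ℂ) * Complex.exp (-c) ∈ Complex.slitPlane) (k : ℤ) :
    (2 * Real.pi * (z : ℂ).im - c.im + Real.pi) / (2 * Real.pi) ≠ (k : ℝ) := by
  intro h
  rw [div_eq_iff (ne_of_gt two_pi_pos)] at h
  set ζ := 2 * (Real.pi : ℂ) * (z : ℂ) - c with hζ
  have him : ζ.im = (k : ℝ) * (2 * Real.pi) - Real.pi := by
    rw [hζ]
    simp only [Complex.sub_im, Complex.mul_im, Complex.mul_re, Complex.ofReal_re,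
      Complex.ofReal_im]
    norm_num
    linarith
  have hXζ : mob (Fmap z : ℂ) * Complex.exp (-c) = Complex.exp ζ := by
    rw [mob_Fmap, ← Complex.exp_add, hζ, sub_eq_add_neg]
  exact exp_not_slitPlane k him (hXζ ▸ hz)

lemma isOpen_U (c : ℂ) :
    IsOpen {w : ({-1, 1}ᶜ : Set ℂ) | mob (w : ℂ) * Complex.exp (-c) ∈ Complex.slitPlane} :=
  Complex.isOpen_slitPlane.preimage (continuous_mobT c)

lemma continuousOn_nz (c : ℂ) :
    ContinuousOn (fun z : (intMulIᶜ : Set ℂ) => nz c (z : ℂ))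
      (Fmap ⁻¹' {w | mob (w : ℂ) * Complex.exp (-c) ∈ Complex.slitPlane}) := by
  have hopen : IsOpen (Fmap ⁻¹' {w | mob (w : ℂ) * Complex.exp (-c) ∈ Complex.slitPlane}) :=
    (isOpen_U c).preimage continuous_Fmap
  intro z₀ hz₀
  apply ContinuousAt.continuousWithinAt
  set v : (intMulIᶜ : Set ℂ) → ℝ :=
    fun z => (2 * Real.pi * (z : ℂ).im - c.im + Real.pi) / (2 * Real.pi) with hv
  have hvcont : Continuous v := by
    apply Continuous.div_const
    apply Continuous.add
    · exact ((continuous_const.mul (Complex.continuous_im.comp continuous_subtype_val)).sub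
        continuous_const)
    · exact continuous_const
  set k₀ : ℤ := nz c (z₀ : ℂ) with hk₀
  have hfl : k₀ = ⌊v z₀⌋ := rfl
  have hne : v z₀ ≠ (k₀ : ℝ) := by
    rw [hfl]
    intro h
    exact nz_not_int z₀ hz₀ ⌊v z₀⌋ (by rw [← h])
  have h1 : (k₀ : ℝ) < v z₀ := lt_of_le_of_ne (by rw [hfl]; exact Int.floor_le _) (Ne.symm hne)
  have h2 : v z₀ < (k₀ : ℝ) + 1 := by rw [hfl]; push_cast; exact Int.lt_floor_add_one _
  have hW : IsOpen (v ⁻¹' Set.Ioo (k₀ : ℝ) ((k₀ : ℝ) + 1)) := isOpen_Ioo.preimage hvcont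
  have hmem : z₀ ∈ v ⁻¹' Set.Ioo (k₀ : ℝ) ((k₀ : ℝ) + 1) := ⟨h1, h2⟩
  have hev : (fun z : (intMulIᶜ : Set ℂ) => nz c (z : ℂ)) =ᶠ[nhds z₀] fun _ => k₀ := by
    filter_upwards [hW.mem_nhds hmem] with z hz
    show nz c (z : ℂ) = k₀
    have : v z ∈ Set.Ioo (k₀ : ℝ) ((k₀ : ℝ) + 1) := hz
    rw [show nz c (z : ℂ) = ⌊v z⌋ from rfl]
    rw [Int.floor_eq_iff]
    exact ⟨le_of_lt this.1, by push_cast; exact this.2⟩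
  exact continuousAt_const.congr hev.symm

lemma ContinuousOn.subtype_mk' {α β : Type*} [TopologicalSpace α] [TopologicalSpace β]
    {p : β → Prop} {f : α → β} {s : Set α} (h : ContinuousOn f s) (hp : ∀ x, p (f x)) :
    ContinuousOn (fun x => (⟨f x, hp x⟩ : Subtype p)) s := fun x hx =>
  tendsto_subtype_rng.mpr (h x hx)

noncomputable def triv (c : ℂ) : Bundle.Trivialization ℤ Fmap where
  toFun z := (Fmap z, nz c (z : ℂ))
  invFun p := ⟨psi c (p.1 : ℂ) p.2, psi_mem p.1 p.2⟩
  source := Fmap ⁻¹' {w | mob (w : ℂ) * Complex.exp (-c) ∈ Complex.slitPlane}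
  target := {w : ({-1, 1}ᶜ : Set ℂ) | mob (w : ℂ) * Complex.exp (-c) ∈ Complex.slitPlane}
    ×ˢ (Set.univ : Set ℤ)
  map_source' z hz := ⟨hz, trivial⟩
  map_target' p hp := by
    simp only [Set.mem_preimage]
    rw [Fmap_psi p.1 p.2]
    exact hp.1
  left_inv' z hz := by
    obtain ⟨k, hk⟩ := exists_rep c z
    have harg : (mob (Fmap z : ℂ) * Complex.exp (-c)).arg ≠ Real.pi :=
      (Complex.mem_slitPlane_iff_arg.mp hz).1
    have hnz : nz c (z : ℂ) = k := by rw [hk]; exact nz_psi harg k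
    apply Subtype.ext
    show psi c (Fmap z : ℂ) (nz c (z : ℂ)) = (z : ℂ)
    rw [hnz, ← hk]
  right_inv' p hp := by
    have harg : (mob (p.1 : ℂ) * Complex.exp (-c)).arg ≠ Real.pi :=
      (Complex.mem_slitPlane_iff_arg.mp hp.1).1
    have h1 : Fmap ⟨psi c (p.1 : ℂ) p.2, psi_mem p.1 p.2⟩ = p.1 := Fmap_psi p.1 p.2
    have h2 : nz c (psi c (p.1 : ℂ) p.2) = p.2 := nz_psi harg p.2
    exact Prod.ext h1 h2
  open_source := (isOpen_U c).preimage continuous_Fmap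
  open_target := (isOpen_U c).prod isOpen_univ
  continuousOn_toFun :=
    ContinuousOn.prodMk (Continuous.continuousOn continuous_Fmap) (continuousOn_nz c)
  continuousOn_invFun := by
    apply ContinuousOn.subtype_mk'
    intro p hp
    apply ContinuousAt.continuousWithinAt
    have hXcont : ContinuousAt
        (fun p : ({-1, 1}ᶜ : Set ℂ) × ℤ => mob (p.1 : ℂ) * Complex.exp (-c)) p :=
      ((continuous_mobT c).comp continuous_fst).continuousAt
    have hlog : ContinuousAt
        (fun p : ({-1, 1}ᶜ : Set ℂ) × ℤ => Complex.log (mob (p.1 : ℂ) * Complex.exp (-c))) p :=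
      hXcont.clog hp.1
    have hint : Continuous (fun p : ({-1, 1}ᶜ : Set ℂ) × ℤ => ((p.2 : ℂ) * Complex.I)) :=
      ((continuous_of_discreteTopology (α := ℤ) (f := fun n : ℤ => (n : ℂ))).comp
        continuous_snd).mul continuous_const
    exact (continuousAt_const.mul (hlog.add continuousAt_const)).add hint.continuousAt
  baseSet := {w | mob (w : ℂ) * Complex.exp (-c) ∈ Complex.slitPlane}
  open_baseSet := isOpen_U c
  source_eq := rfl
  target_eq := rfl
  proj_toFun _ _ := rfl

lemma isCoveringMap_Fmap : IsCoveringMap Fmap := by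
  intro x
  apply IsEvenlyCovered.to_isEvenlyCovered_preimage (I := ℤ)
  have h0 : mob (x : ℂ) ≠ 0 := mob_ne_zero (T_ne_one x) (T_ne_neg_one x)
  refine IsEvenlyCovered.of_trivialization (t := triv (Complex.log (mob (x : ℂ)))) ?_
  show mob (x : ℂ) * Complex.exp (-(Complex.log (mob (x : ℂ)))) ∈ Complex.slitPlane
  rw [Complex.exp_neg, Complex.exp_log h0, mul_inv_cancel₀ h0]
  simp [Complex.mem_slitPlane_iff]

lemma surjective_Fmap : Function.Surjective Fmap :=
  fun x => ⟨⟨psi 0 (x : ℂ) 0, psi_mem x 0⟩, Fmap_psi x 0⟩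

/-- The map `f = f₁ ∘ f₂` is a covering map from `ℂ \ iℤ` onto `ℂ \ {−1, 1}`. -/
theorem covering_map_of_log_covering :
    ∃ F : (intMulIᶜ : Set ℂ) → ({-1, 1}ᶜ : Set ℂ),
      (∀ z : (intMulIᶜ : Set ℂ), (F z : ℂ) = fOne (fTwo (z : ℂ))) ∧
      IsCoveringMap F ∧ Function.Surjective F := by
  exact ⟨Fmap, Fmap_val, isCoveringMap_Fmap, surjective_Fmap⟩
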